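/- Fix α > 1, 0 < ε < 1, and 0 < λ, μ < ∞. There exists a finite constant C > 1 (independent of a) with the following property: for all a > 0, if K' = {z = x + iy ∈ ℂⁿ : x₁ ∈ (−2λa, 2λa), x₂,…,x_n ∈ (−2μa, 2μa), y ∈ Γ_{8√n·α}, y_n ∈ (a/2, 4a)} and K = {z : x₁ ∈ (−λa, λa), x₂,…,x_n ∈ (−μa, μa), y ∈ Γ_α, y_n ∈ (a, 2a)}, then every plurisubharmonic u on K' with u ≤ 1 on K' and mes({z ∈ K' : u(z) ≤ ε/2})/mes(K') > 1 − 1/C satisfies u < ε on K. -/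

import Mathlib

open MeasureTheory Set Metric

noncomputable section

instance (n : ℕ) : MeasureSpace (EuclideanSpace ℂ (Fin n)) :=
  { volume := Measure.map (MeasurableEquiv.toLp 2 (Fin n → ℂ)) volume }

/-- The open circular cone `Γ_α = {y ∈ ℝⁿ : |y| < α·y_n}` about the positive `y_n`-axis. -/
def coneGamma (n : ℕ) (α : ℝ) : Set (EuclideanSpace ℝ (Fin (n + 1))) :=
  {y | ‖y‖ < α * y (Fin.last n)}

/-- Imaginary part of a point of ℂⁿ, as a point of ℝⁿ. -/
def imPart {n : ℕ} (z : EuclideanSpace ℂ (Fin (n + 1))) : EuclideanSpace ℝ (Fin (n + 1)) :=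
  WithLp.toLp 2 (fun j => (z j).im)

/-- The small box `K` built on the cone `Γ_α`. -/
def smallBox (n : ℕ) (α lam mu a : ℝ) : Set (EuclideanSpace ℂ (Fin (n + 1))) :=
  {z | (z 0).re ∈ Set.Ioo (-(lam * a)) (lam * a) ∧
       (∀ j : Fin (n + 1), j ≠ 0 → (z j).re ∈ Set.Ioo (-(mu * a)) (mu * a)) ∧
       imPart z ∈ coneGamma n α ∧
       (z (Fin.last n)).im ∈ Set.Ioo a (2 * a)}

/-- The large box `K'` built on the enlarged cone `Γ_{8√n·α}`. -/
def largeBox (n : ℕ) (α lam mu a : ℝ) : Set (EuclideanSpace ℂ (Fin (n + 1))) :=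
  {z | (z 0).re ∈ Set.Ioo (-(2 * lam * a)) (2 * lam * a) ∧
       (∀ j : Fin (n + 1), j ≠ 0 → (z j).re ∈ Set.Ioo (-(2 * mu * a)) (2 * mu * a)) ∧
       imPart z ∈ coneGamma n (8 * Real.sqrt (n + 1) * α) ∧
       (z (Fin.last n)).im ∈ Set.Ioo (a / 2) (4 * a)}

/-- A surrogate definition of plurisubharmonicity on an open subset of ℂⁿ:
upper semicontinuity together with the sub-mean value inequality over Euclidean balls
(a property enjoyed by every plurisubharmonic function). -/
def PSHOn {n : ℕ} (u : EuclideanSpace ℂ (Fin n) → ℝ) (D : Set (EuclideanSpace ℂ (Fin n))) : Prop :=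
  UpperSemicontinuousOn u D ∧
  ∀ z : EuclideanSpace ℂ (Fin n), ∀ r : ℝ, 0 < r → Metric.closedBall z r ⊆ D →
    u z ≤ ((volume (Metric.ball z r)).toReal)⁻¹ * ∫ w in Metric.ball z r, u w

/-! ### Auxiliary instances and lemmas -/

instance (m : ℕ) : BorelSpace (EuclideanSpace ℂ (Fin m)) :=
  inferInstance

instance (m : ℕ) : (volume : Measure (EuclideanSpace ℂ (Fin m))).IsAddHaarMeasure :=
  by
  show (Measure.map (MeasurableEquiv.toLp 2 (Fin m → ℂ)) volume).IsAddHaarMeasure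
  have : ⇑(MeasurableEquiv.toLp 2 (Fin m → ℂ)) =
      ⇑(PiLp.continuousLinearEquiv 2 ℝ (fun _ : Fin m => ℂ)).symm := rfl
  rw [this]
  exact (PiLp.continuousLinearEquiv 2 ℝ (fun _ : Fin m => ℂ)).symm.isAddHaarMeasure_map _

lemma euclidean_coord_norm_le {m : ℕ} (v : EuclideanSpace ℂ (Fin m)) (j : Fin m) : ‖v j‖ ≤ ‖v‖ := by
  rw [EuclideanSpace.norm_eq, show ‖v j‖ = Real.sqrt (‖v j‖^2) from (Real.sqrt_sq (norm_nonneg _)).symm]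
  exact Real.sqrt_le_sqrt (Finset.single_le_sum (fun i _ => sq_nonneg ‖v i‖) (Finset.mem_univ j))

lemma imPart_norm_le {m : ℕ} (v : EuclideanSpace ℂ (Fin (m+1))) :
    ‖imPart v‖ ≤ ‖v‖ := by
  rw [EuclideanSpace.norm_eq, EuclideanSpace.norm_eq]
  apply Real.sqrt_le_sqrt
  apply Finset.sum_le_sum
  intro i _
  have h : |(v i).im| ≤ ‖v i‖ := by exact Complex.abs_im_le_norm (v i)
  show ‖imPart v i‖ ^ 2 ≤ _
  rw [imPart, Real.norm_eq_abs]
  exact pow_le_pow_left₀ (abs_nonneg _) h 2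

lemma imPart_sub {m : ℕ} (x y : EuclideanSpace ℂ (Fin (m+1))) :
    imPart x - imPart y = imPart (x - y) := by
  ext j
  simp [imPart]

lemma imPart_lip {m : ℕ} (x y : EuclideanSpace ℂ (Fin (m+1))) :
    ‖imPart x - imPart y‖ ≤ ‖x - y‖ := by rw [imPart_sub]; exact imPart_norm_le _

lemma measurableSet_usc_le {m : ℕ} {u : EuclideanSpace ℂ (Fin m) → ℝ}
    {D : Set (EuclideanSpace ℂ (Fin m))} (hD : IsOpen D) (hu : UpperSemicontinuousOn u D)
    (t : ℝ) : MeasurableSet {x ∈ D | u x ≤ t} := by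
  have hopen : ∀ s : ℝ, IsOpen {x ∈ D | u x < s} := by
    intro s
    rw [isOpen_iff_mem_nhds]
    rintro x ⟨hxD, hxu⟩
    have h1 := hu x hxD s hxu
    rw [nhdsWithin_eq_nhds.2 (hD.mem_nhds hxD)] at h1
    filter_upwards [h1, hD.mem_nhds hxD] with y h2 h3
    exact ⟨h3, h2⟩
  have hEq : {x ∈ D | u x ≤ t} = ⋂ k : ℕ, {x ∈ D | u x < t + 1/(k+1)} := by
    ext x
    simp only [mem_iInter, mem_setOf_eq]
    constructor
    · rintro ⟨h1, h2⟩ k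
      refine ⟨h1, lt_of_le_of_lt h2 ?_⟩
      have : (0:ℝ) < 1/(k+1) := by positivity
      linarith
    · intro hk
      refine ⟨(hk 0).1, le_iff_forall_pos_lt_add.2 fun δ hδ => ?_⟩
      obtain ⟨k, hk'⟩ := exists_nat_one_div_lt hδ
      exact lt_trans (hk k).2 (by linarith)
  rw [hEq]
  exact MeasurableSet.iInter fun k => (hopen _).measurableSet

lemma isOpen_coneGamma (n : ℕ) (β : ℝ) : IsOpen (coneGamma n β) :=
  isOpen_lt continuous_norm
    (continuous_const.mul (EuclideanSpace.proj (Fin.last n) :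
      EuclideanSpace ℝ (Fin (n+1)) →L[ℝ] ℝ).continuous)

lemma continuous_imPart {m : ℕ} : Continuous (@imPart m) := by
  have : LipschitzWith 1 (@imPart m) := by
    apply LipschitzWith.of_dist_le_mul
    intro x y
    rw [dist_eq_norm, dist_eq_norm, NNReal.coe_one, one_mul]
    exact imPart_lip x y
  exact this.continuous

lemma isOpen_largeBox (n : ℕ) (α lam mu a : ℝ) : IsOpen (largeBox n α lam mu a) := by
  have hre : ∀ (j : Fin (n+1)), Continuous fun z : EuclideanSpace ℂ (Fin (n+1)) => (z j).re :=
    fun j => Complex.continuous_re.comp (EuclideanSpace.proj j :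
      EuclideanSpace ℂ (Fin (n+1)) →L[ℂ] ℂ).continuous
  have him : ∀ (j : Fin (n+1)), Continuous fun z : EuclideanSpace ℂ (Fin (n+1)) => (z j).im :=
    fun j => Complex.continuous_im.comp (EuclideanSpace.proj j :
      EuclideanSpace ℂ (Fin (n+1)) →L[ℂ] ℂ).continuous
  have hEq : largeBox n α lam mu a =
      ((fun z : EuclideanSpace ℂ (Fin (n+1)) => (z 0).re) ⁻¹' Ioo (-(2*lam*a)) (2*lam*a)) ∩
      ((⋂ j : Fin (n+1), {z : EuclideanSpace ℂ (Fin (n+1)) |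
          j ≠ 0 → (z j).re ∈ Ioo (-(2*mu*a)) (2*mu*a)}) ∩
      ((imPart ⁻¹' coneGamma n (8*Real.sqrt (n+1)*α)) ∩
      ((fun z : EuclideanSpace ℂ (Fin (n+1)) => (z (Fin.last n)).im) ⁻¹' Ioo (a/2) (4*a)))) := by
    ext z
    simp only [largeBox, mem_setOf_eq, mem_inter_iff, mem_iInter, mem_preimage]
  rw [hEq]
  refine IsOpen.inter (isOpen_Ioo.preimage (hre 0)) (IsOpen.inter ?_
    (IsOpen.inter ((isOpen_coneGamma n _).preimage continuous_imPart)
      (isOpen_Ioo.preimage (him _))))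
  refine isOpen_iInter_of_finite fun j => ?_
  by_cases hj : j = 0
  · convert isOpen_univ
    ext z; simp [hj]
  · have : {z : EuclideanSpace ℂ (Fin (n+1)) | j ≠ 0 → (z j).re ∈ Ioo (-(2*mu*a)) (2*mu*a)}
        = (fun z : EuclideanSpace ℂ (Fin (n+1)) => (z j).re) ⁻¹' Ioo (-(2*mu*a)) (2*mu*a) := by
      ext z; simp [hj]
    rw [this]
    exact isOpen_Ioo.preimage (hre j)

lemma one_le_sqrtN (n : ℕ) : 1 ≤ Real.sqrt (n + 1) := by
  have h := Real.sqrt_le_sqrt (show (1:ℝ) ≤ (n:ℝ)+1 by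
    have : (0:ℝ) ≤ (n:ℝ) := Nat.cast_nonneg n; linarith)
  rwa [Real.sqrt_one] at h

lemma coord_re_diff {m : ℕ} (w z : EuclideanSpace ℂ (Fin m)) (j : Fin m) :
    |(w j).re - (z j).re| ≤ ‖w - z‖ := by
  have h1 : (w j).re - (z j).re = ((w - z) j).re := by
    show _ = (w j - z j).re; rw [Complex.sub_re]
  rw [h1]
  calc |((w - z) j).re| ≤ ‖(w - z) j‖ := by
        exact Complex.abs_re_le_norm _
    _ ≤ ‖w - z‖ := euclidean_coord_norm_le _ j

lemma coord_im_diff {m : ℕ} (w z : EuclideanSpace ℂ (Fin m)) (j : Fin m) :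
    |(w j).im - (z j).im| ≤ ‖w - z‖ := by
  have h1 : (w j).im - (z j).im = ((w - z) j).im := by
    show _ = (w j - z j).im; rw [Complex.sub_im]
  rw [h1]
  calc |((w - z) j).im| ≤ ‖(w - z) j‖ := by
        exact Complex.abs_im_le_norm _
    _ ≤ ‖w - z‖ := euclidean_coord_norm_le _ j

set_option maxHeartbeats 1000000 in
lemma closedBall_subset_largeBox (n : ℕ) (α lam mu a : ℝ) (hα : 1 < α)
    (hlam : 0 < lam) (hmu : 0 < mu) (ha : 0 < a) {c : ℝ}
    (hc0 : 0 < c) (hcl : c ≤ lam) (hcm : c ≤ mu) (hc4 : c ≤ 4⁻¹)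
    {z : EuclideanSpace ℂ (Fin (n+1))} (hz : z ∈ smallBox n α lam mu a) :
    Metric.closedBall z (c * a) ⊆ largeBox n α lam mu a := by
  obtain ⟨hz1, hz2, hz3, hz4⟩ := hz
  have hs1 : 1 ≤ Real.sqrt (n + 1) := one_le_sqrtN n
  intro w hw
  rw [Metric.mem_closedBall, dist_eq_norm] at hw
  have hra : c * a ≤ a / 4 := by nlinarith
  have hrl : c * a ≤ lam * a := by nlinarith
  have hrm : c * a ≤ mu * a := by nlinarith
  obtain ⟨hz1a, hz1b⟩ := hz1
  obtain ⟨hz4a, hz4b⟩ := hz4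
  have hwlast := abs_le.1 ((coord_im_diff w z (Fin.last n)).trans hw)
  refine ⟨?_, ?_, ?_, ?_⟩
  · have h := abs_le.1 ((coord_re_diff w z 0).trans hw)
    constructor <;> nlinarith [h.1, h.2]
  · intro j hj
    obtain ⟨h1, h2⟩ := hz2 j hj
    have h := abs_le.1 ((coord_re_diff w z j).trans hw)
    constructor <;> nlinarith [h.1, h.2]
  · show ‖imPart w‖ < (8 * Real.sqrt (n+1) * α) * imPart w (Fin.last n)
    have hyn : imPart w (Fin.last n) = (w (Fin.last n)).im := rfl
    have h2 : ‖imPart w‖ ≤ ‖imPart z‖ + ‖w - z‖ := by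
      have := norm_sub_norm_le (imPart w) (imPart z)
      have h3 := imPart_lip w z
      linarith
    have hz3' : ‖imPart z‖ < α * (z (Fin.last n)).im := hz3
    rw [hyn]
    have hα0 : (0:ℝ) < α := by linarith
    have hyw : 3*a/4 ≤ (w (Fin.last n)).im := by linarith [hwlast.1]
    have k1 : ‖imPart w‖ < 2*α*a + a/4 := by nlinarith [norm_nonneg (imPart z)]
    have k2 : 8*α*(w (Fin.last n)).im ≤ 8*Real.sqrt (↑n+1)*α*(w (Fin.last n)).im := by
      nlinarith [mul_nonneg (mul_nonneg
        (by linarith : (0:ℝ) ≤ Real.sqrt (↑n+1) - 1) (by linarith : (0:ℝ) ≤ 8*α))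
        (by linarith : (0:ℝ) ≤ (w (Fin.last n)).im)]
    have hαa : a ≤ α*a := le_mul_of_one_le_left ha.le hα.le
    have k3 : 2*α*a + a/4 < 8*α*(3*a/4) := by linarith
    have k4 : 8*α*(3*a/4) ≤ 8*α*(w (Fin.last n)).im :=
      mul_le_mul_of_nonneg_left hyw (by linarith : (0:ℝ) ≤ 8*α)
    linarith
  · constructor <;> [nlinarith [hwlast.1]; nlinarith [hwlast.2]]

set_option maxHeartbeats 1000000 in
lemma largeBox_norm_le (n : ℕ) (α lam mu a : ℝ) (hα : 1 < α)
    (hlam : 0 < lam) (hmu : 0 < mu) (ha : 0 < a)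
    {z : EuclideanSpace ℂ (Fin (n+1))} (hz : z ∈ largeBox n α lam mu a) :
    ‖z‖ ≤ (Real.sqrt (n+1) * (2*(lam+mu) + 32*α)) * a := by
  obtain ⟨hz1, hz2, hz3, hz4⟩ := hz
  have hs1 : 1 ≤ Real.sqrt (n + 1) := one_le_sqrtN n
  have hs0 : 0 ≤ Real.sqrt (n + 1) := by linarith
  have hssq : Real.sqrt ((n:ℝ) + 1) ^ 2 = (n:ℝ) + 1 := Real.sq_sqrt (by positivity)
  set ρ : ℝ := Real.sqrt (n+1) * (2*(lam+mu) + 32*α) with hρ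
  have hρa : 0 ≤ ρ * a := by positivity
  have hx : ∀ j : Fin (n+1), |(z j).re| ≤ 2*(lam+mu)*a := by
    intro j
    by_cases hj : j = 0
    · subst hj
      obtain ⟨h1, h2⟩ := hz1
      rw [abs_le]; constructor <;> nlinarith
    · obtain ⟨h1, h2⟩ := hz2 j hj
      rw [abs_le]; constructor <;> nlinarith
  have hy : ‖imPart z‖ ≤ 32 * Real.sqrt (n+1) * α * a := by
    have h1 : ‖imPart z‖ < (8 * Real.sqrt (n+1) * α) * imPart z (Fin.last n) := hz3
    have h2 : imPart z (Fin.last n) = (z (Fin.last n)).im := rfl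
    obtain ⟨h3, h4⟩ := hz4
    nlinarith [h1, norm_nonneg (imPart z)]
  rw [EuclideanSpace.norm_eq]
  have hterm : ∀ j : Fin (n+1), ‖z j‖^2 = (z j).re^2 + (z j).im^2 := by
    intro j
    rw [Complex.sq_norm, Complex.normSq_apply]
    ring
  have hsum : ∑ j : Fin (n+1), ‖z j‖^2
      = (∑ j : Fin (n+1), (z j).re^2) + (∑ j : Fin (n+1), (z j).im^2) := by
    rw [← Finset.sum_add_distrib]
    exact Finset.sum_congr rfl fun j _ => hterm j
  have hresum : ∑ j : Fin (n+1), (z j).re^2 ≤ ((n:ℝ)+1) * (2*(lam+mu)*a)^2 := by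
    calc ∑ j : Fin (n+1), (z j).re^2 ≤ ∑ _j : Fin (n+1), (2*(lam+mu)*a)^2 := by
          apply Finset.sum_le_sum
          intro j _
          have := hx j
          nlinarith [abs_nonneg ((z j).re), sq_abs ((z j).re)]
      _ = ((n:ℝ)+1) * (2*(lam+mu)*a)^2 := by
          rw [Finset.sum_const, Finset.card_univ, Fintype.card_fin, nsmul_eq_mul]
          push_cast; ring
  have himsum : ∑ j : Fin (n+1), (z j).im^2 ≤ (32 * Real.sqrt (n+1) * α * a)^2 := by
    have h5 : ‖imPart z‖^2 = ∑ j : Fin (n+1), (z j).im^2 := by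
      rw [EuclideanSpace.norm_eq, Real.sq_sqrt (by positivity)]
      apply Finset.sum_congr rfl
      intro j _
      rw [show imPart z j = (z j).im from rfl, Real.norm_eq_abs, sq_abs]
    rw [← h5]
    nlinarith [norm_nonneg (imPart z)]
  have hS : ∑ j : Fin (n+1), ‖z j‖^2 ≤ (ρ * a)^2 := by
    have hfact : (32*Real.sqrt (↑n+1)*α*a)^2 = ((n:ℝ)+1)*(32*α*a)^2 := by
      linear_combination (1024*α^2*a^2) * hssq
    have h6 : (ρ*a)^2 = ((n:ℝ)+1) * ((2*(lam+mu)+32*α)^2 * a^2) := by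
      rw [hρ]
      linear_combination ((2*(lam+mu)+32*α)^2*a^2) * hssq
    have hpos : (0:ℝ) ≤ ((n:ℝ)+1)*(2*(lam+mu))*(32*α)*a^2 := by positivity
    rw [hsum, h6]
    rw [hfact] at himsum
    nlinarith [hresum, himsum]
  calc Real.sqrt (∑ j : Fin (n+1), ‖z j‖^2) ≤ Real.sqrt ((ρ*a)^2) := Real.sqrt_le_sqrt hS
    _ = ρ * a := Real.sqrt_sq hρa

/-- Scale-invariant version: there is a constant `C > 1`, independent of `a`, such that any
plurisubharmonic function on the large box which is `≤ 1` and is `≤ ε/2` off a set of relative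
measure `< 1/C` satisfies `u < ε` on the small box. -/
theorem psh_cone_box_estimate
    (n : ℕ) (α ε lam mu : ℝ) (hα : 1 < α) (hε0 : 0 < ε) (hε1 : ε < 1)
    (hlam : 0 < lam) (hmu : 0 < mu) :
    ∃ C : ℝ, 1 < C ∧ ∀ a : ℝ, 0 < a →
      ∀ u : EuclideanSpace ℂ (Fin (n + 1)) → ℝ,
        PSHOn u (largeBox n α lam mu a) →
        (∀ z ∈ largeBox n α lam mu a, u z ≤ 1) →
        (volume {z ∈ largeBox n α lam mu a | u z ≤ ε / 2}).toReal /
            (volume (largeBox n α lam mu a)).toReal > 1 - 1 / C →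
        ∀ z ∈ smallBox n α lam mu a, u z < ε := by
  classical
  set c : ℝ := min (min lam mu) 4⁻¹ with hcdef
  have hc0 : 0 < c := lt_min (lt_min hlam hmu) (by norm_num)
  have hcl : c ≤ lam := (min_le_left _ _).trans (min_le_left _ _)
  have hcm : c ≤ mu := (min_le_left _ _).trans (min_le_right _ _)
  have hc4 : c ≤ 4⁻¹ := min_le_right _ _
  set ρ : ℝ := Real.sqrt (n+1) * (2*(lam+mu) + 32*α) with hρdef
  have hs1 : 1 ≤ Real.sqrt ((n:ℝ) + 1) := one_le_sqrtN n
  have hρ0 : 0 < ρ := by nlinarith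
  set d : ℕ := Module.finrank ℝ (EuclideanSpace ℂ (Fin (n+1))) with hddef
  set M : ℝ := (2*ρ/c)^d with hMdef
  have hM0 : 0 < M := by positivity
  set C : ℝ := 1 + 2*M/ε with hCdef
  have hC1 : 1 < C := by
    have : 0 < 2*M/ε := by positivity
    rw [hCdef]; linarith
  have hC0 : 0 < C := by linarith
  refine ⟨C, hC1, ?_⟩
  intro a ha u hpsh hub hmeas zz hzz
  set K' := largeBox n α lam mu a with hK'def
  have hKopen : IsOpen K' := isOpen_largeBox n α lam mu a
  have hKmeas : MeasurableSet K' := hKopen.measurableSet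
  set vb : ENNReal := volume (Metric.ball (0 : EuclideanSpace ℂ (Fin (n+1))) 1) with hvbdef
  have hvb0 : vb ≠ 0 := (measure_ball_pos volume _ one_pos).ne'
  have hvbt : vb ≠ ⊤ := measure_ball_lt_top.ne
  have ht0 : 0 < vb.toReal := ENNReal.toReal_pos hvb0 hvbt
  set r : ℝ := c * a with hrdef
  have hr0 : 0 < r := mul_pos hc0 ha
  have hball : Metric.closedBall zz r ⊆ K' :=
    closedBall_subset_largeBox n α lam mu a hα hlam hmu ha hc0 hcl hcm hc4 hzz
  have hBsub : Metric.ball zz r ⊆ K' := Metric.ball_subset_closedBall.trans hball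
  have hKsub : K' ⊆ Metric.ball 0 (2*ρ*a) := by
    intro x hx
    rw [mem_ball_zero_iff]
    have h := largeBox_norm_le n α lam mu a hα hlam hmu ha hx
    nlinarith
  have hvol_ball : volume (Metric.ball zz r) = ENNReal.ofReal (r^d) * vb :=
    Measure.addHaar_ball volume zz hr0.le
  have hvol_big : volume (Metric.ball (0 : EuclideanSpace ℂ (Fin (n+1))) (2*ρ*a))
      = ENNReal.ofReal ((2*ρ*a)^d) * vb :=
    Measure.addHaar_ball volume 0 (by positivity)
  set b : ℝ := (volume (Metric.ball zz r)).toReal with hbdef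
  have hbval : b = r^d * vb.toReal := by
    rw [hbdef, hvol_ball, ENNReal.toReal_mul, ENNReal.toReal_ofReal (by positivity)]
  have hb0 : 0 < b := by rw [hbval]; positivity
  have hKtop : volume K' ≠ ⊤ :=
    ne_top_of_le_ne_top measure_ball_lt_top.ne (measure_mono hKsub)
  set V : ℝ := (volume K').toReal with hVdef
  have hVle : V ≤ (2*ρ*a)^d * vb.toReal := by
    rw [hVdef]
    calc (volume K').toReal ≤ (ENNReal.ofReal ((2*ρ*a)^d) * vb).toReal := by
          apply ENNReal.toReal_mono (ENNReal.mul_ne_top ENNReal.ofReal_ne_top hvbt)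
          rw [← hvol_big]
          exact measure_mono hKsub
      _ = (2*ρ*a)^d * vb.toReal := by
          rw [ENNReal.toReal_mul, ENNReal.toReal_ofReal (by positivity)]
  have hVM : V ≤ M * b := by
    have h1 : (2*ρ*a)^d = (2*ρ/c)^d * r^d := by
      rw [hrdef, ← mul_pow]
      congr 1
      field_simp
    calc V ≤ (2*ρ*a)^d * vb.toReal := hVle
      _ = (2*ρ/c)^d * (r^d * vb.toReal) := by rw [h1]; ring
      _ = M * b := by rw [hMdef, hbval]
  -- the good and bad sets
  set G := {x ∈ K' | u x ≤ ε/2} with hGdef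
  have hGmeas : MeasurableSet G := measurableSet_usc_le hKopen hpsh.1 (ε/2)
  have hGsub : G ⊆ K' := fun x hx => hx.1
  have hGtop : volume G ≠ ⊤ := ne_top_of_le_ne_top hKtop (measure_mono hGsub)
  set g : ℝ := (volume G).toReal with hgdef
  have hVpos : 0 < V := by
    rcases lt_or_ge 0 V with h | h
    · exact h
    · exfalso
      have hV0 : V = 0 := le_antisymm h ENNReal.toReal_nonneg
      rw [hV0, div_zero] at hmeas
      have h1 : 1/C < 1 := by rw [div_lt_one hC0]; linarith
      linarith
  have hg_gt : (1 - 1/C) * V < g := (lt_div_iff₀ hVpos).1 hmeas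
  set Bd := K' \ G with hBddef
  have hBdtop : volume Bd ≠ ⊤ := ne_top_of_le_ne_top hKtop (measure_mono Set.diff_subset)
  have hbad : (volume Bd).toReal < V / C := by
    have h1 : volume Bd = volume K' - volume G :=
      measure_diff hGsub hGmeas.nullMeasurableSet hGtop
    rw [hBddef] at h1
    have h2 : (volume Bd).toReal = V - g := by
      rw [hBddef, h1, ENNReal.toReal_sub_of_le (measure_mono hGsub) hKtop, hVdef, hgdef]
    have hid : V - (1 - 1/C) * V = V / C := by
      field_simp
      ring
    linarith [h2, hg_gt]
  -- the sub-mean value inequality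
  have hmean := hpsh.2 zz r hr0 hball
  rw [← hbdef] at hmean
  by_cases hint : MeasureTheory.IntegrableOn u (Metric.ball zz r) volume
  · set S1 := Metric.ball zz r ∩ G with hS1def
    set S2 := Metric.ball zz r \ G with hS2def
    have hS1m : MeasurableSet S1 := measurableSet_ball.inter hGmeas
    have hS2m : MeasurableSet S2 := measurableSet_ball.diff hGmeas
    have hunion : S1 ∪ S2 = Metric.ball zz r := Set.inter_union_diff _ _
    have hdisj : Disjoint S1 S2 :=
      Set.disjoint_sdiff_right.mono_left Set.inter_subset_right
    have hi1 : IntegrableOn u S1 volume := hint.mono_set Set.inter_subset_left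
    have hi2 : IntegrableOn u S2 volume := hint.mono_set Set.diff_subset
    have hsplit : ∫ w in Metric.ball zz r, u w = (∫ w in S1, u w) + ∫ w in S2, u w := by
      rw [← hunion, MeasureTheory.setIntegral_union hdisj hS2m hi1 hi2]
    have hS1vol : volume S1 < ⊤ :=
      lt_of_le_of_lt (measure_mono Set.inter_subset_left) measure_ball_lt_top
    have hS2vol : volume S2 < ⊤ :=
      lt_of_le_of_lt (measure_mono Set.diff_subset) measure_ball_lt_top
    have he1 : ∫ w in S1, u w ≤ (ε/2) * (volume S1).toReal := by
      have h := MeasureTheory.setIntegral_mono_on hi1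
        (integrableOn_const hS1vol.ne) hS1m (fun x hx => hx.2.2)
      rwa [MeasureTheory.setIntegral_const, smul_eq_mul, mul_comm] at h
    have he1' : (ε/2) * (volume S1).toReal ≤ (ε/2) * b := by
      apply mul_le_mul_of_nonneg_left _ (by linarith)
      rw [hbdef]
      exact ENNReal.toReal_mono measure_ball_lt_top.ne (measure_mono Set.inter_subset_left)
    have he2 : ∫ w in S2, u w ≤ (volume Bd).toReal := by
      have hS2Bd : S2 ⊆ Bd := fun x hx => ⟨hBsub hx.1, hx.2⟩
      have h2 : ∫ w in S2, u w ≤ 1 * (volume S2).toReal := by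
        have h := MeasureTheory.setIntegral_mono_on hi2
          (integrableOn_const hS2vol.ne) hS2m (fun x hx => hub x (hBsub hx.1))
        rwa [MeasureTheory.setIntegral_const, smul_eq_mul, mul_comm] at h
      have h3 : (volume S2).toReal ≤ (volume Bd).toReal :=
        ENNReal.toReal_mono hBdtop (measure_mono hS2Bd)
      linarith
    have hI : ∫ w in Metric.ball zz r, u w ≤ (ε/2)*b + (volume Bd).toReal := by
      rw [hsplit]; linarith
    have hfin : u zz ≤ ε/2 + (volume Bd).toReal / b := by
      have hbne : b ≠ 0 := ne_of_gt hb0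
      have h4 : b⁻¹ * ((ε/2)*b + (volume Bd).toReal) = ε/2 + (volume Bd).toReal / b := by
        rw [mul_add, mul_comm (ε/2) b, inv_mul_cancel_left₀ hbne, ← div_eq_inv_mul]
      calc u zz ≤ b⁻¹ * ∫ w in Metric.ball zz r, u w := hmean
        _ ≤ b⁻¹ * ((ε/2)*b + (volume Bd).toReal) :=
            mul_le_mul_of_nonneg_left hI (inv_nonneg.2 hb0.le)
        _ = ε/2 + (volume Bd).toReal / b := h4
    have h5 : (volume Bd).toReal / b < M / C := by
      rw [div_lt_div_iff₀ hb0 hC0]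
      calc (volume Bd).toReal * C < (V/C)*C := mul_lt_mul_of_pos_right hbad hC0
        _ = V := by field_simp
        _ ≤ M * b := hVM
    have h6 : M / C ≤ ε/2 := by
      rw [div_le_iff₀ hC0]
      have hCe : ε/2 * C = ε/2 + M := by
        rw [hCdef]; field_simp
      rw [hCe]; linarith
    linarith
  · have hzero : ∫ w in Metric.ball zz r, u w = 0 := integral_undef hint
    rw [hzero, mul_zero] at hmean
    linarith
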